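/- arXiv:1502.02307 — 3 statements merged into one kernel-verified Lean document; each statement's English description precedes it below -/
import Mathlib

section
/- Let (X, T) be a minimal topological dynamical system on a compact metric space (T a homeomorphism), let (G, τ) be an odometer, and let π : X → G be an almost 1-1 factor map. Then a point x ∈ X is regularly recurrent if and only if π⁻¹({π(x)}) = {x}. -/
open Filter Topology Set


section Aux
variable {X : Type*} [TopologicalSpace X]

lemma cont_zpow (T : X ≃ₜ X) : ∀ n : ℤ, Continuous ⇑(T.toEquiv ^ n) := by
  intro n
  induction n using Int.induction_on with
  | zero => simpa using continuous_id
  | succ k ih =>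
      have h1 : T.toEquiv ^ ((k : ℤ) + 1) = T.toEquiv * T.toEquiv ^ (k : ℤ) := by
        rw [show ((k:ℤ)+1) = 1 + (k:ℤ) by ring, zpow_add, zpow_one]
      rw [h1]
      simpa [Equiv.Perm.coe_mul] using T.continuous.comp ih
  | pred k ih =>
      have h1 : T.toEquiv ^ (-(k : ℤ) - 1) = T.toEquiv⁻¹ * T.toEquiv ^ (-(k : ℤ)) := by
        rw [show (-(k:ℤ) - 1) = -1 + -(k:ℤ) by ring, zpow_add, zpow_neg_one]
      rw [h1]
      have hs : Continuous ⇑(T.toEquiv⁻¹) := T.symm.continuous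
      simpa [Equiv.Perm.coe_mul] using hs.comp ih

variable {G : Type*} [AddCommGroup G]

lemma pi_zpow (T : X ≃ₜ X) (π : X → G) (g₀ : G)
    (hπequiv : ∀ x : X, π (T x) = π x + g₀) :
    ∀ (n : ℤ) (z : X), π ((T.toEquiv ^ n) z) = π z + n • g₀ := by
  have hdown : ∀ z : X, π (T.symm z) = π z - g₀ := by
    intro z
    have h := hπequiv (T.symm z)
    rw [T.apply_symm_apply] at h
    rw [h]; abel
  intro n
  induction n using Int.induction_on with
  | zero => intro z; simp
  | succ k ih =>
      intro z
      have h1 : T.toEquiv ^ ((k : ℤ) + 1) = T.toEquiv * T.toEquiv ^ (k : ℤ) := by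
        rw [show ((k:ℤ)+1) = 1 + (k:ℤ) by ring, zpow_add, zpow_one]
      rw [h1]
      have h2 : (T.toEquiv * T.toEquiv ^ (k:ℤ)) z = T ((T.toEquiv ^ (k:ℤ)) z) := rfl
      rw [h2, hπequiv, ih]
      rw [add_zsmul, one_zsmul]; abel
  | pred k ih =>
      intro z
      have h1 : T.toEquiv ^ (-(k : ℤ) - 1) = T.toEquiv⁻¹ * T.toEquiv ^ (-(k : ℤ)) := by
        rw [show (-(k:ℤ) - 1) = -1 + -(k:ℤ) by ring, zpow_add, zpow_neg_one]
      rw [h1]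
      have h2 : (T.toEquiv⁻¹ * T.toEquiv ^ (-(k:ℤ))) z = T.symm ((T.toEquiv ^ (-(k:ℤ))) z) := rfl
      rw [h2, hdown, ih]
      rw [sub_zsmul, one_zsmul]; abel

end Aux

section MinOrbit
variable {X : Type*} [TopologicalSpace X] [CompactSpace X] [T2Space X]

lemma orbit_closure_min (e : X ≃ X) (hc : ∀ n : ℤ, Continuous ⇑(e ^ n))
    (hmin : ∀ x : X, Dense (range fun n : ℤ => (e ^ n) x))
    (p : ℕ) (hp : 1 ≤ p) (a c : X)
    (hca : c ∈ closure (range fun m : ℤ => (e ^ (m * (p:ℤ))) a)) :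
    closure (range fun m : ℤ => (e ^ (m * (p:ℤ))) c)
      = closure (range fun m : ℤ => (e ^ (m * (p:ℤ))) a) := by
  -- basic helpers
  have hcomp : ∀ (n m : ℤ) (x : X), (e ^ n) ((e ^ m) x) = (e ^ (n + m)) x := by
    intro n m x; rw [zpow_add]; rfl
  have himg : ∀ (n m : ℤ) (A : Set X), ⇑(e ^ n) '' (⇑(e ^ m) '' A) = ⇑(e ^ (n + m)) '' A := by
    intro n m A
    have hfe : ⇑(e ^ n) ∘ ⇑(e ^ m) = ⇑(e ^ (n + m)) := funext (hcomp n m)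
    rw [← image_comp, hfe]
  have himg_closed : ∀ (n : ℤ) (A : Set X), IsClosed A → IsClosed (⇑(e ^ n) '' A) := by
    intro n A hA
    exact (hA.isCompact.image (hc n)).isClosed
  have himg_closure : ∀ (n : ℤ) (A : Set X), ⇑(e ^ n) '' closure A = closure (⇑(e ^ n) '' A) := by
    intro n A
    have h1 : ⇑(e ^ n) '' closure A ⊆ closure (⇑(e ^ n) '' A) :=
      image_closure_subset_closure_image (hc n)
    have h2 : closure (⇑(e ^ n) '' A) ⊆ ⇑(e ^ n) '' closure A := by
      apply closure_minimal (image_mono subset_closure)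
      exact himg_closed n _ isClosed_closure
    exact subset_antisymm h1 h2
  set K : X → Set X := fun z => closure (range fun m : ℤ => (e ^ (m * (p:ℤ))) z) with hK
  have hKrange : ∀ (j : ℤ) (z : X),
      ⇑(e ^ (j * (p:ℤ))) '' (range fun m : ℤ => (e ^ (m * (p:ℤ))) z)
        = (range fun m : ℤ => (e ^ (m * (p:ℤ))) z) := by
    intro j z
    ext x
    simp only [mem_image, mem_range]
    constructor
    · rintro ⟨-, ⟨m, rfl⟩, rfl⟩
      exact ⟨j + m, by rw [hcomp, ← add_mul]⟩
    · rintro ⟨m, rfl⟩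
      exact ⟨(e ^ ((m - j) * (p:ℤ))) z, ⟨m - j, rfl⟩, by rw [hcomp, ← add_mul]; ring_nf⟩
  have hKinv : ∀ (j : ℤ) (z : X), ⇑(e ^ (j * (p:ℤ))) '' K z = K z := by
    intro j z
    rw [hK]
    simp only
    rw [himg_closure, hKrange]
  have hKmem : ∀ z : X, z ∈ K z := by
    intro z
    apply subset_closure
    exact ⟨0, by simp⟩
  have hKclosed : ∀ z : X, IsClosed (K z) := fun z => isClosed_closure
  have hKsub : ∀ z w : X, w ∈ K z → K w ⊆ K z := by
    intro z w hw
    apply closure_minimal _ (hKclosed z)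
    rintro x ⟨m, rfl⟩
    rw [← hKinv m z]
    exact mem_image_of_mem _ hw
  -- the Zorn argument
  set S : Set (Set X) := {A | A.Nonempty ∧ IsClosed A ∧ ∀ j : ℤ, ⇑(e ^ (j * (p:ℤ))) ⁻¹' A = A}
    with hS
  have hpre_of_img : ∀ (A : Set X), (∀ j : ℤ, ⇑(e ^ (j * (p:ℤ))) '' A = A) →
      (∀ j : ℤ, ⇑(e ^ (j * (p:ℤ))) ⁻¹' A = A) := by
    intro A hA j
    have := hA (-j)
    have h2 : ⇑(e ^ (j * (p:ℤ))) ⁻¹' A = ⇑(e ^ (j * (p:ℤ))) ⁻¹' (⇑(e ^ (j * (p:ℤ))) '' (⇑(e ^ ((-j) * (p:ℤ))) '' A)) := by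
      rw [himg]
      norm_num
    rw [h2, preimage_image_eq _ (Equiv.injective _), this]
  have himg_of_pre : ∀ (A : Set X), (∀ j : ℤ, ⇑(e ^ (j * (p:ℤ))) ⁻¹' A = A) →
      (∀ j : ℤ, ⇑(e ^ (j * (p:ℤ))) '' A = A) := by
    intro A hA j
    conv_lhs => rw [← hA j]
    exact image_preimage_eq _ (Equiv.surjective _)
  have hKa_S : K a ∈ S := by
    refine ⟨⟨a, hKmem a⟩, hKclosed a, hpre_of_img _ (fun j => hKinv j a)⟩
  have hzorn : ∀ c ⊆ S, IsChain (· ⊆ ·) c → c.Nonempty → ∃ lb ∈ S, ∀ s ∈ c, lb ⊆ s := by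
    intro c hcS hchain hcne
    refine ⟨⋂₀ c, ⟨?_, ?_, ?_⟩, fun s hs => sInter_subset_of_mem hs⟩
    · haveI : Nonempty ↑c := hcne.to_subtype
      apply IsCompact.nonempty_sInter_of_directed_nonempty_isCompact_isClosed
      · intro A hA B hB
        rcases eq_or_ne A B with rfl | hne
        · exact ⟨A, hA, Subset.rfl, Subset.rfl⟩
        · rcases hchain hA hB hne with h | h
          · exact ⟨A, hA, Subset.rfl, h⟩
          · exact ⟨B, hB, h, Subset.rfl⟩
      · exact fun U hU => (hcS hU).1
      · exact fun U hU => ((hcS hU).2.1).isCompact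
      · exact fun U hU => (hcS hU).2.1
    · exact isClosed_sInter fun U hU => (hcS hU).2.1
    · intro j
      rw [preimage_sInter]
      have heq : ⋂ B ∈ c, ⇑(e ^ (j * (p:ℤ))) ⁻¹' B = ⋂ B ∈ c, B :=
        iInter₂_congr (fun B hB => (hcS hB).2.2 j)
      rw [heq, sInter_eq_biInter]
  obtain ⟨M, hMsub, hMmin⟩ := zorn_superset_nonempty S hzorn (K a) hKa_S
  -- M is a minimal invariant set inside K a; show K a = M
  obtain ⟨hMne, hMclosed, hMpre⟩ := hMmin.1
  have hMimg : ∀ j : ℤ, ⇑(e ^ (j * (p:ℤ))) '' M = M := himg_of_pre M hMpre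
  obtain ⟨b₀, hb₀⟩ := hMne
  -- the union of translates covers X
  set B : Set X := ⋃ k ∈ Finset.range p, ⇑(e ^ (k:ℤ)) '' M with hB
  have hBclosed : IsClosed B := by
    apply Set.Finite.isClosed_biUnion (Finset.finite_toSet _)
    intro k _
    exact himg_closed _ _ hMclosed
  have hBuniv : B = univ := by
    apply eq_univ_of_univ_subset
    have hdense := hmin b₀
    rw [← hdense.closure_eq]
    apply closure_minimal _ hBclosed
    rintro x ⟨n, rfl⟩
    have hp' : (0:ℤ) < (p:ℤ) := by exact_mod_cast hp
    have hr0 : 0 ≤ n % (p:ℤ) := Int.emod_nonneg n (ne_of_gt hp')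
    have hrp : n % (p:ℤ) < (p:ℤ) := Int.emod_lt_of_pos n hp'
    have hn : n % (p:ℤ) + (n / (p:ℤ)) * (p:ℤ) = n := by
      rw [mul_comm]
      exact Int.emod_add_mul_ediv n (p:ℤ)
    have hx : (e ^ n) b₀ = (e ^ (n % (p:ℤ))) ((e ^ ((n / (p:ℤ)) * (p:ℤ))) b₀) := by
      rw [hcomp, hn]
    have hmem : (e ^ ((n / (p:ℤ)) * (p:ℤ))) b₀ ∈ M := by
      rw [← hMimg (n / (p:ℤ))]
      exact mem_image_of_mem _ hb₀
    rw [hB]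
    simp only [mem_iUnion]
    refine ⟨(n % (p:ℤ)).toNat, ?_, ?_⟩
    · simp only [Finset.mem_range]
      omega
    · rw [hx]
      have : ((n % (p:ℤ)).toNat : ℤ) = n % (p:ℤ) := Int.toNat_of_nonneg hr0
      rw [this]
      exact mem_image_of_mem _ hmem
  -- a lies in some translate
  have ha_mem : a ∈ B := by rw [hBuniv]; trivial
  rw [hB] at ha_mem
  simp only [mem_iUnion, Finset.mem_range] at ha_mem
  obtain ⟨k, hk, haM⟩ := ha_mem
  -- K a ⊆ e^k '' M
  have hA'inv : ∀ j : ℤ, ⇑(e ^ (j * (p:ℤ))) '' (⇑(e ^ (k:ℤ)) '' M) = ⇑(e ^ (k:ℤ)) '' M := by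
    intro j
    rw [himg, show (j * (p:ℤ) + (k:ℤ)) = (k:ℤ) + j * (p:ℤ) by ring, ← himg, hMimg]
  have hKaA' : K a ⊆ ⇑(e ^ (k:ℤ)) '' M := by
    apply closure_minimal _ (himg_closed _ _ hMclosed)
    rintro x ⟨m, rfl⟩
    rw [← hA'inv m]
    exact mem_image_of_mem _ haM
  have hMA' : M ⊆ ⇑(e ^ (k:ℤ)) '' M := hMsub.trans hKaA'
  -- iterate: M ⊆ e^{jk} '' M for all j : ℕ
  have hiter : ∀ j : ℕ, M ⊆ ⇑(e ^ ((j:ℤ) * (k:ℤ))) '' M := by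
    intro j
    induction j with
    | zero => simp
    | succ i ih =>
        calc M ⊆ ⇑(e ^ ((i:ℤ) * (k:ℤ))) '' M := ih
        _ ⊆ ⇑(e ^ ((i:ℤ) * (k:ℤ))) '' (⇑(e ^ (k:ℤ)) '' M) := image_mono hMA'
        _ = ⇑(e ^ (((i:ℤ)+1) * (k:ℤ))) '' M := by rw [himg]; ring_nf
  have hMk_eq : ⇑(e ^ (k:ℤ)) '' M = M := by
    have hpk : ⇑(e ^ ((k:ℤ) * (p:ℤ))) '' M = M := by
      have := hMimg (k:ℤ)
      exact this
    rcases Nat.eq_zero_or_pos k with rfl | hkpos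
    · simp
    · -- e^{(p-1)k} '' M ⊆ M and M ⊆ e^{(p-1)k} '' M
      have h1 : ⇑(e ^ (((p:ℤ) - 1) * (k:ℤ))) '' M ⊆ M := by
        intro x hx
        rcases hx with ⟨y, hy, rfl⟩
        have : (e ^ (((p:ℤ)-1) * (k:ℤ))) y ∈ ⇑(e ^ (((p:ℤ)-1) * (k:ℤ))) '' (⇑(e ^ (k:ℤ)) '' M) := by
          apply mem_image_of_mem
          exact hMA' hy
        rw [himg, show (((p:ℤ)-1) * (k:ℤ) + (k:ℤ)) = (k:ℤ) * (p:ℤ) by ring, hpk] at this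
        exact this
      have h2 : M ⊆ ⇑(e ^ (((p:ℤ) - 1) * (k:ℤ))) '' M := by
        have := hiter (p - 1)
        have hcast : ((p - 1 : ℕ) : ℤ) = (p:ℤ) - 1 := by omega
        rwa [hcast] at this
      have hMeq : ⇑(e ^ (((p:ℤ) - 1) * (k:ℤ))) '' M = M := subset_antisymm h1 h2
      calc ⇑(e ^ (k:ℤ)) '' M = ⇑(e ^ (k:ℤ)) '' (⇑(e ^ (((p:ℤ)-1) * (k:ℤ))) '' M) := by rw [hMeq]
      _ = ⇑(e ^ ((k:ℤ) * (p:ℤ))) '' M := by rw [himg]; ring_nf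
      _ = M := hMimg (k:ℤ)
  have hKaM : K a = M := by
    apply subset_antisymm
    · rw [← hMk_eq]; exact hKaA'
    · exact hMsub
  -- conclude
  have hKc_S : K c ∈ S := ⟨⟨c, hKmem c⟩, hKclosed c, hpre_of_img _ (fun j => hKinv j c)⟩
  have hKc_sub : K c ⊆ K a := hKsub a c hca
  have : K a ⊆ K c := by
    rw [hKaM]
    exact hMmin.2 hKc_S (by rw [← hKaM]; exact hKc_sub)
  exact subset_antisymm hKc_sub this

end MinOrbit


section Grp
variable {G : Type*} [AddCommGroup G] [TopologicalSpace G] [IsTopologicalAddGroup G]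

lemma zmult_closure_isOpen (g₀ : G) (hgen : Dense (Set.range fun n : ℤ => n • g₀))
    (p : ℕ) (hp : 1 ≤ p) :
    IsOpen ((AddSubgroup.zmultiples ((p:ℤ) • g₀)).topologicalClosure : Set G) := by
  classical
  set H := (AddSubgroup.zmultiples ((p:ℤ) • g₀)).topologicalClosure with hHdef
  have hHclosed : IsClosed (H : Set G) := AddSubgroup.isClosed_topologicalClosure _
  set coset : ℕ → Set G := fun k => (fun y => ((k:ℤ) • g₀) + y) '' (H : Set G) with hcoset
  have hcoset_closed : ∀ k, IsClosed (coset k) := by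
    intro k
    exact (Homeomorph.addLeft ((k:ℤ) • g₀)).isClosedMap _ hHclosed
  have hmem_coset : ∀ n : ℤ, n • g₀ ∈ coset (n % (p:ℤ)).toNat := by
    intro n
    have hp' : (0:ℤ) < (p:ℤ) := by exact_mod_cast hp
    have hr0 : 0 ≤ n % (p:ℤ) := Int.emod_nonneg n (ne_of_gt hp')
    have htn : (((n % (p:ℤ)).toNat : ℤ)) = n % (p:ℤ) := Int.toNat_of_nonneg hr0
    refine ⟨((n / (p:ℤ)) * (p:ℤ)) • g₀, ?_, ?_⟩
    · apply AddSubgroup.le_topologicalClosure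
      rw [AddSubgroup.mem_zmultiples_iff]
      exact ⟨n / (p:ℤ), by rw [← mul_zsmul]⟩
    · show ((((n % (p:ℤ)).toNat : ℤ)) • g₀) + ((n / (p:ℤ)) * (p:ℤ)) • g₀ = n • g₀
      rw [htn, ← add_zsmul]
      congr 1
      rw [mul_comm]
      exact Int.emod_add_mul_ediv n (p:ℤ)
  have hcover : (⋃ k ∈ Finset.range p, coset k) = univ := by
    apply eq_univ_of_univ_subset
    rw [← hgen.closure_eq]
    apply closure_minimal
    · rintro g ⟨n, rfl⟩
      have hp' : (0:ℤ) < (p:ℤ) := by exact_mod_cast hp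
      have hrp : n % (p:ℤ) < (p:ℤ) := Int.emod_lt_of_pos n hp'
      have hr0 : 0 ≤ n % (p:ℤ) := Int.emod_nonneg n (ne_of_gt hp')
      simp only [mem_iUnion]
      exact ⟨(n % (p:ℤ)).toNat, by simp only [Finset.mem_range]; omega, hmem_coset n⟩
    · exact Set.Finite.isClosed_biUnion (Finset.finite_toSet _) (fun k _ => hcoset_closed k)
  rw [← isClosed_compl_iff]
  have hcompl : (H : Set G)ᶜ =
      ⋃ k ∈ (Finset.range p).filter (fun k : ℕ => ¬ ((k:ℤ) • g₀ ∈ H)), coset k := by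
    ext g
    simp only [mem_compl_iff, mem_iUnion, Finset.mem_filter, Finset.mem_range]
    constructor
    · intro hg
      have : g ∈ ⋃ k ∈ Finset.range p, coset k := by rw [hcover]; trivial
      simp only [mem_iUnion, Finset.mem_range] at this
      obtain ⟨k, hk, hgk⟩ := this
      refine ⟨k, ⟨hk, ?_⟩, hgk⟩
      intro hkH
      apply hg
      obtain ⟨h, hh, rfl⟩ := hgk
      exact AddSubgroup.add_mem _ hkH hh
    · rintro ⟨k, ⟨hk, hkH⟩, hgk⟩ hgH
      apply hkH
      obtain ⟨h, hh, rfl⟩ := hgk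
      have := AddSubgroup.sub_mem _ hgH hh
      simpa using this
  rw [hcompl]
  exact Set.Finite.isClosed_biUnion (Finset.finite_toSet _) (fun k _ => hcoset_closed k)

lemma exists_pos_zsmul_mem (g₀ : G) [CompactSpace G] (H : AddSubgroup G)
    (hH : IsOpen (H : Set G)) :
    ∃ p : ℕ, 1 ≤ p ∧ ((p:ℤ) • g₀) ∈ H := by
  have hcover : univ ⊆ ⋃ g : G, (fun y => g + y) '' (H : Set G) := by
    intro g _
    exact mem_iUnion.mpr ⟨g, ⟨0, H.zero_mem, by simp⟩⟩
  obtain ⟨t, ht⟩ := isCompact_univ.elim_finite_subcover _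
    (fun g : G => (Homeomorph.addLeft g).isOpenMap _ hH) hcover
  have hchoice : ∀ n : ℤ, ∃ g, g ∈ t ∧ n • g₀ ∈ (fun y => g + y) '' (H : Set G) := by
    intro n
    have := ht (mem_univ (n • g₀))
    simp only [mem_iUnion, exists_prop] at this; exact this
  choose f hf1 hf2 using hchoice
  have hfin : ∃ n m : ℤ, n ≠ m ∧ f n = f m := by
    have : ¬ Function.Injective (fun n : ℤ => (⟨f n, hf1 n⟩ : {g // g ∈ t})) := by
      intro hinj
      exact (Finite.of_injective _ hinj).false
    rw [Function.not_injective_iff] at this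
    obtain ⟨n, m, heq, hne⟩ := this
    exact ⟨n, m, hne, congrArg Subtype.val heq⟩
  obtain ⟨n, m, hne, hfeq⟩ := hfin
  obtain ⟨h₁, hh₁, he₁⟩ := hf2 n
  obtain ⟨h₂, hh₂, he₂⟩ := hf2 m
  have he₁' : f n + h₁ = n • g₀ := he₁
  have he₂' : f m + h₂ = m • g₀ := he₂
  have hdiff : (n - m) • g₀ ∈ H := by
    have h3 : (n - m) • g₀ = h₁ - h₂ := by
      rw [sub_zsmul, ← he₁', ← he₂', hfeq]
      abel
    rw [h3]
    exact H.sub_mem hh₁ hh₂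
  refine ⟨(n - m).natAbs, ?_, ?_⟩
  · have : n - m ≠ 0 := sub_ne_zero.mpr hne
    omega
  · rcases Int.natAbs_eq (n - m) with h | h
    · rwa [← h]
    · rw [show (((n - m).natAbs : ℤ)) = -(n - m) by omega, neg_zsmul]
      exact H.neg_mem hdiff
end Grp


/-- Let `(X,T)` be minimal, `(G,τ)` an odometer (`τ` the rotation by a
topological generator `g₀` of an infinite compact metrizable totally disconnected abelian
group) and `π : X → G` an almost 1-1 factor map. Then `x ∈ X` is regularly recurrent iff
`π⁻¹({π x}) = {x}`. -/
theorem regularly_recurrent_iff_singleton_fiber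
    {X : Type*} [MetricSpace X] [CompactSpace X]
    {G : Type*} [AddCommGroup G] [TopologicalSpace G] [IsTopologicalAddGroup G]
    [CompactSpace G] [TopologicalSpace.MetrizableSpace G]
    [TotallyDisconnectedSpace G] [Infinite G]
    (g₀ : G) (hgen : Dense (Set.range fun n : ℤ => n • g₀))
    (T : X ≃ₜ X)
    -- (X,T) is minimal
    (hmin : ∀ x : X, Dense (Set.range fun n : ℤ => (T.toEquiv ^ n) x))
    -- π is a factor map onto the odometer (G, τ), τ(g) = g + g₀
    (π : X → G) (hπcont : Continuous π) (hπsurj : Function.Surjective π)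
    (hπequiv : ∀ x : X, π (T x) = π x + g₀)
    -- π is almost 1-1
    (ha11 : {x : X | π ⁻¹' {π x} = {x}} ∈ residual X) :
    ∀ x : X,
      (∀ U : Set X, IsOpen U → x ∈ U →
          ∃ p : ℕ, 1 ≤ p ∧ ∀ m : ℤ, (T.toEquiv ^ (m * p)) x ∈ U)
        ↔ π ⁻¹' {π x} = {x} := by
  have hpi : ∀ (n : ℤ) (z : X), π ((T.toEquiv ^ n) z) = π z + n • g₀ :=
    pi_zpow T π g₀ hπequiv
  have hcomp : ∀ (n m : ℤ) (z : X),
      (T.toEquiv ^ n) ((T.toEquiv ^ m) z) = (T.toEquiv ^ (n + m)) z := by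
    intro n m z; rw [zpow_add]; rfl
  -- the set of singleton-fiber points is invariant
  have hRinv : ∀ z : X, π ⁻¹' {π z} = {z} → ∀ n : ℤ,
      π ⁻¹' {π ((T.toEquiv ^ n) z)} = {(T.toEquiv ^ n) z} := by
    intro z hz n
    ext w
    simp only [mem_preimage, mem_singleton_iff]
    constructor
    · intro hw
      have h1 : π ((T.toEquiv ^ (-n)) w) = π z := by
        rw [hpi, hw, hpi, neg_zsmul]
        abel
      have h2 : (T.toEquiv ^ (-n)) w ∈ π ⁻¹' {π z} := by
        simpa [mem_preimage, mem_singleton_iff] using h1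
      rw [hz, mem_singleton_iff] at h2
      have := congrArg (⇑(T.toEquiv ^ n)) h2
      rwa [hcomp, add_neg_cancel, zpow_zero, Equiv.Perm.coe_one, id_eq] at this
    · rintro rfl
      rfl
  -- image of closure under π contains closure of image
  have hclim : ∀ A : Set X, closure (π '' A) ⊆ π '' closure A := by
    intro A
    apply closure_minimal (image_mono subset_closure)
    exact ((isClosed_closure.isCompact).image hπcont).isClosed
  intro x
  constructor
  · -- forward: regular recurrence ⇒ singleton fiber
    intro hrec
    refine Set.eq_singleton_iff_unique_mem.mpr ⟨rfl, ?_⟩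
    intro y hy
    rw [mem_preimage, mem_singleton_iff] at hy
    apply eq_of_forall_dist_le
    intro ε hε
    obtain ⟨p, hp, hU⟩ := hrec (Metric.ball x ε) Metric.isOpen_ball (Metric.mem_ball_self hε)
    set H := (AddSubgroup.zmultiples ((p:ℤ) • g₀)).topologicalClosure with hHdef
    have hHopen : IsOpen (H : Set G) := zmult_closure_isOpen g₀ hgen p hp
    -- a point with singleton fiber in the right coset
    have hXne : Nonempty X := ⟨(hπsurj 0).choose⟩
    have hdense : Dense {z : X | π ⁻¹' {π z} = {z}} := dense_of_mem_residual ha11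
    obtain ⟨z₀, hz₀⟩ : ∃ z, π ⁻¹' {π z} = {z} := hdense.nonempty
    have hO : IsOpen ((fun y => (π x - π z₀) + y) '' (H : Set G)) :=
      (Homeomorph.addLeft (π x - π z₀)).isOpenMap _ hHopen
    obtain ⟨g, ⟨n₁, rfl⟩, hgO⟩ := hgen.exists_mem_open hO
      ⟨π x - π z₀, ⟨0, H.zero_mem, by simp⟩⟩
    obtain ⟨h₁, hh₁, hhe⟩ := hgO
    have hhe' : (π x - π z₀) + h₁ = n₁ • g₀ := hhe
    set zs := (T.toEquiv ^ n₁) z₀ with hzs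
    have hzs_fib : π ⁻¹' {π zs} = {zs} := hRinv z₀ hz₀ n₁
    have hgsH : π zs - π x ∈ H := by
      rw [hzs, hpi, ← hhe']
      have : π z₀ + (π x - π z₀ + h₁) - π x = h₁ := by abel
      rw [this]
      exact hh₁
    -- zs belongs to the closure of the p-orbit of any point in the fiber of π x
    have hzs_mem : ∀ z : X, π z = π x →
        zs ∈ closure (range fun m : ℤ => (T.toEquiv ^ (m * (p:ℤ))) z) := by
      intro z hz
      have himg : π '' (range fun m : ℤ => (T.toEquiv ^ (m * (p:ℤ))) z)
          = (fun h => π x + h) '' (range fun m : ℤ => m • ((p:ℤ) • g₀)) := by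
        rw [← range_comp, ← range_comp]
        have hfe : (π ∘ fun m : ℤ => (T.toEquiv ^ (m * (p:ℤ))) z)
            = ((fun h => π x + h) ∘ fun m : ℤ => m • ((p:ℤ) • g₀)) := by
          funext m
          show π ((T.toEquiv ^ (m * (p:ℤ))) z) = π x + m • ((p:ℤ) • g₀)
          rw [hpi, hz, mul_zsmul]
        rw [hfe]
      have hgs_in : π zs ∈ closure (π '' (range fun m : ℤ => (T.toEquiv ^ (m * (p:ℤ))) z)) := by
        rw [himg]
        have hcl : closure ((fun h => π x + h) '' (range fun m : ℤ => m • ((p:ℤ) • g₀)))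
            = (fun h => π x + h) '' closure (range fun m : ℤ => m • ((p:ℤ) • g₀)) :=
          ((Homeomorph.addLeft (π x)).image_closure _).symm
        rw [hcl]
        have hHcoe : closure (range fun m : ℤ => m • ((p:ℤ) • g₀)) = (H : Set G) := by
          rw [hHdef, AddSubgroup.topologicalClosure_coe]
          congr 1
        rw [hHcoe]
        refine ⟨π zs - π x, hgsH, ?_⟩
        show π x + (π zs - π x) = π zs
        abel
      have := hclim _ hgs_in
      obtain ⟨w, hw, hwz⟩ := this
      have : w ∈ π ⁻¹' {π zs} := by simpa [mem_preimage, mem_singleton_iff] using hwz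
      rw [hzs_fib, mem_singleton_iff] at this
      rwa [← this]
    -- both p-orbit closures equal that of zs, by minimality
    have hKx := orbit_closure_min T.toEquiv (cont_zpow T) hmin p hp x zs (hzs_mem x rfl)
    have hKy := orbit_closure_min T.toEquiv (cont_zpow T) hmin p hp y zs (hzs_mem y hy)
    have hyK : y ∈ closure (range fun m : ℤ => (T.toEquiv ^ (m * (p:ℤ))) x) := by
      rw [← hKx, hKy]
      exact subset_closure ⟨0, by simp⟩
    have hKU : closure (range fun m : ℤ => (T.toEquiv ^ (m * (p:ℤ))) x)
        ⊆ closure (Metric.ball x ε) := by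
      apply closure_minimal _ isClosed_closure
      rintro w ⟨m, rfl⟩
      exact subset_closure (hU m)
    have := Metric.closure_ball_subset_closedBall (hKU hyK)
    rw [Metric.mem_closedBall] at this
    exact this
  · -- backward: singleton fiber ⇒ regular recurrence
    intro hfib U hUopen hxU
    have hUc_cpt : IsCompact (Uᶜ : Set X) := (isClosed_compl_iff.mpr hUopen).isCompact
    have hWclosed : IsClosed (π '' (Uᶜ : Set X)) := (hUc_cpt.image hπcont).isClosed
    have hπxW : π x ∉ π '' (Uᶜ : Set X) := by
      rintro ⟨w, hw, hwx⟩
      have : w ∈ π ⁻¹' {π x} := by simpa [mem_preimage, mem_singleton_iff] using hwx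
      rw [hfib, mem_singleton_iff] at this
      exact hw (this ▸ hxU)
    -- translate the open complement to a neighborhood of 0
    have hOopen : IsOpen ((fun g => -π x + g) '' (π '' (Uᶜ : Set X))ᶜ) :=
      (Homeomorph.addLeft (-π x)).isOpenMap _ hWclosed.isOpen_compl
    have h0O : (0 : G) ∈ (fun g => -π x + g) '' (π '' (Uᶜ : Set X))ᶜ :=
      ⟨π x, hπxW, by abel⟩
    obtain ⟨V, hVclopen, h0V, hVO⟩ := compact_exists_isClopen_in_isOpen hOopen h0O
    obtain ⟨H, hHV⟩ :=
      IsTopologicalAddGroup.exist_openAddSubgroup_sub_clopen_nhds_of_zero hVclopen h0V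
    obtain ⟨p, hp, hpg⟩ := exists_pos_zsmul_mem g₀ H.toAddSubgroup H.isOpen
    refine ⟨p, hp, fun m => ?_⟩
    have hmem : (m * (p:ℤ)) • g₀ ∈ (H : Set G) := by
      rw [mul_zsmul]
      exact AddSubgroup.zsmul_mem _ hpg m
    have hO : (m * (p:ℤ)) • g₀ ∈ (fun g => -π x + g) '' (π '' (Uᶜ : Set X))ᶜ :=
      hVO (hHV hmem)
    obtain ⟨w, hwmem, hweq⟩ := hO
    have hweq' : -π x + w = (m * (p:ℤ)) • g₀ := hweq
    have hπT : π ((T.toEquiv ^ (m * (p:ℤ))) x) = w := by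
      rw [hpi, ← hweq']
      abel
    by_contra hcon
    apply hwmem
    rw [← hπT]
    exact mem_image_of_mem π hcon
end

section
/- Let Λ be a nonempty finite set, let x₀ : ℤ → Λ be a regularly recurrent sequence (for every n ∈ ℤ there is p ≥ 1 with x₀(n + mp) = x₀(n) for all m ∈ ℤ), and let X ⊆ Λ^ℤ be the closure of the orbit of x₀ under the left shift. For p ≥ 1 and x ∈ X set Per_p(x) = {n ∈ ℤ : x(n + mp) = x(n) for all m ∈ ℤ}. Then for every p ≥ 1 and every x ∈ X, the two-sided density lim_{N→∞} |Per_p(x) ∩ [−N, N]| / (2N+1) exists and equals the corresponding density for x₀; i.e., the density of the p-periodic part is constant throughout X. -/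
open Classical Filter Topology


lemma sum_window_step (p : ℕ) (f : ℤ → ℝ) (hf : ∀ n, f (n + p) = f n) (b : ℤ) :
    ∑ i ∈ Finset.range p, f (b + 1 + i) = ∑ i ∈ Finset.range p, f (b + i) := by
  have h1 := Finset.sum_range_succ (fun i : ℕ => f (b + i)) p
  have h2 := Finset.sum_range_succ' (fun i : ℕ => f (b + i)) p
  simp only [Nat.cast_add, Nat.cast_one, Nat.cast_zero, add_zero] at h1 h2
  have e : ∀ i : ℕ, f (b + ((i:ℤ) + 1)) = f (b + 1 + i) := fun i => by congr 1; ring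
  simp only [e] at h2
  rw [hf b] at h1
  rw [h1] at h2
  linarith

lemma sum_window (p : ℕ) (f : ℤ → ℝ) (hf : ∀ n, f (n + p) = f n) (a : ℤ) :
    ∑ i ∈ Finset.range p, f (a + i) = ∑ i ∈ Finset.range p, f i := by
  induction a using Int.induction_on with
  | zero => simp
  | succ a ih =>
      have h := sum_window_step p f hf a
      rw [← ih, ← h]
      try (apply Finset.sum_congr rfl; intro i _; congr 1; ring)
  | pred a ih =>
      have h := sum_window_step p f hf (-(a:ℤ) - 1)
      rw [← ih, ← h]
      try (apply Finset.sum_congr rfl; intro i _; congr 1; ring)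

lemma sum_Ioc_block_one (p : ℕ) (f : ℤ → ℝ) (b : ℤ) :
    ∑ n ∈ Finset.Ioc b (b + (p:ℤ)), f n = ∑ i ∈ Finset.range p, f (b + 1 + i) := by
  apply Finset.sum_nbij' (fun n => (n - (b+1)).toNat) (fun i => b + 1 + (i:ℤ))
  · intro n hn
    simp only [Finset.mem_Ioc] at hn
    simp only [Finset.mem_range]
    omega
  · intro i hi
    simp only [Finset.mem_range] at hi
    simp only [Finset.mem_Ioc]
    omega
  · intro n hn
    simp only [Finset.mem_Ioc] at hn
    omega
  · intro i hi
    simp only [Finset.mem_range] at hi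
    omega
  · intro n hn
    simp only [Finset.mem_Ioc] at hn
    congr 1
    omega

lemma sum_Ioc_block (p : ℕ) (f : ℤ → ℝ) (hf : ∀ n, f (n + p) = f n) (b : ℤ) (k : ℕ) :
    ∑ n ∈ Finset.Ioc b (b + (k:ℤ) * p), f n = k * ∑ i ∈ Finset.range p, f i := by
  induction k with
  | zero => simp
  | succ k ih =>
      have hp0 : (0:ℤ) ≤ (p:ℤ) := Int.natCast_nonneg p
      have hk0 : (0:ℤ) ≤ (k:ℤ) := Int.natCast_nonneg k
      have e : ((((k:ℕ)+1):ℕ):ℤ) * p = (k:ℤ)*p + (p:ℤ) := by push_cast; ring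
      have h1 : b ≤ b + (k:ℤ) * p := by nlinarith
      have h2 : b + (k:ℤ) * p ≤ b + (((k+1):ℕ):ℤ) * p := by rw [e]; linarith
      have hdisj : Disjoint (Finset.Ioc b (b + (k:ℤ)*p)) (Finset.Ioc (b + (k:ℤ)*p) (b + (((k+1):ℕ):ℤ) * p)) := by
        apply Finset.disjoint_left.2
        intro n hn hn'
        simp only [Finset.mem_Ioc] at hn hn'
        omega
      have hsplit : (∑ n ∈ Finset.Ioc b (b + (k:ℤ)*p), f n) + ∑ n ∈ Finset.Ioc (b + (k:ℤ)*p) (b + (((k+1):ℕ):ℤ)*p), f n = ∑ n ∈ Finset.Ioc b (b + (((k+1):ℕ):ℤ)*p), f n := by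
        rw [← Finset.sum_union hdisj, Finset.Ioc_union_Ioc_eq_Ioc h1 h2]
      have hlast : ∑ n ∈ Finset.Ioc (b + (k:ℤ)*p) (b + (((k+1):ℕ):ℤ)*p), f n
          = ∑ i ∈ Finset.range p, f i := by
        have e2 : b + (((k+1):ℕ):ℤ)*p = (b + (k:ℤ)*p) + (p:ℤ) := by rw [e]; ring
        rw [e2, sum_Ioc_block_one]
        have hw := sum_window p f hf (b + (k:ℤ)*p + 1)
        rw [← hw]
        try (apply Finset.sum_congr rfl; intro i _; congr 1; ring)
      rw [← hsplit, ih, hlast]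
      push_cast; ring

lemma density_periodic (p : ℕ) (hp : 1 ≤ p) (f : ℤ → ℝ) (hf : ∀ n, f (n + p) = f n)
    (h0 : ∀ n, 0 ≤ f n) (h1 : ∀ n, f n ≤ 1) :
    Tendsto (fun N : ℕ => (∑ n ∈ Finset.Icc (-(N:ℤ)) (N:ℤ), f n) / (2 * N + 1))
      atTop (𝓝 ((∑ i ∈ Finset.range p, f i) / p)) := by
  set s := ∑ i ∈ Finset.range p, f i with hs
  have hs0 : 0 ≤ s := Finset.sum_nonneg fun i _ => h0 i
  have hs1 : s ≤ p := by
    calc s ≤ ∑ i ∈ Finset.range p, (1:ℝ) := Finset.sum_le_sum fun i _ => h1 i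
    _ = p := by simp
  have hpR : (0:ℝ) < p := by exact_mod_cast hp
  have key : ∀ N : ℕ, |(∑ n ∈ Finset.Icc (-(N:ℤ)) (N:ℤ), f n) - (2*(N:ℝ)+1) * (s / p)| ≤ 2 * p := by
    intro N
    set k := (2*N+1)/p with hk
    set r := (2*N+1)%p with hr
    have hdm : p * k + r = 2*N+1 := Nat.div_add_mod (2*N+1) p
    have hrp : r < p := Nat.mod_lt _ (by omega)
    have hdmZ : (k:ℤ) * p + r = 2*(N:ℤ)+1 := by push_cast; push_cast at hdm; linarith
    have hIcc : Finset.Icc (-(N:ℤ)) (N:ℤ) = Finset.Ioc (-(N:ℤ)-1) (N:ℤ) := by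
      ext z; simp only [Finset.mem_Icc, Finset.mem_Ioc]; omega
    have hr0 : (0:ℤ) ≤ (r:ℤ) := Int.natCast_nonneg r
    have hb1 : -(N:ℤ)-1 ≤ -(N:ℤ)-1 + (k:ℤ)*p := by
      nlinarith [Int.natCast_nonneg k, Int.natCast_nonneg p]
    have hb2 : -(N:ℤ)-1 + (k:ℤ)*p ≤ (N:ℤ) := by linarith
    have hdisj : Disjoint (Finset.Ioc (-(N:ℤ)-1) (-(N:ℤ)-1 + (k:ℤ)*p))
        (Finset.Ioc (-(N:ℤ)-1 + (k:ℤ)*p) (N:ℤ)) := by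
      apply Finset.disjoint_left.2
      intro n hn hn'
      simp only [Finset.mem_Ioc] at hn hn'
      omega
    have hsplit : (∑ n ∈ Finset.Ioc (-(N:ℤ)-1) (-(N:ℤ)-1 + (k:ℤ)*p), f n)
        + ∑ n ∈ Finset.Ioc (-(N:ℤ)-1 + (k:ℤ)*p) (N:ℤ), f n
        = ∑ n ∈ Finset.Ioc (-(N:ℤ)-1) (N:ℤ), f n := by
      rw [← Finset.sum_union hdisj, Finset.Ioc_union_Ioc_eq_Ioc hb1 hb2]
    have hA : ∑ n ∈ Finset.Ioc (-(N:ℤ)-1) (-(N:ℤ)-1 + (k:ℤ)*p), f n = (k:ℝ) * s :=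
      sum_Ioc_block p f hf _ k
    set B := ∑ n ∈ Finset.Ioc (-(N:ℤ)-1 + (k:ℤ)*p) (N:ℤ), f n with hB
    have hcard : (Finset.Ioc (-(N:ℤ)-1 + (k:ℤ)*p) (N:ℤ)).card = r := by
      rw [Int.card_Ioc]
      omega
    have hB0 : 0 ≤ B := Finset.sum_nonneg fun i _ => h0 i
    have hB1 : B ≤ (r:ℝ) := by
      calc B ≤ ∑ n ∈ Finset.Ioc (-(N:ℤ)-1 + (k:ℤ)*p) (N:ℤ), (1:ℝ) :=
            Finset.sum_le_sum fun i _ => h1 i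
      _ = (r:ℝ) := by rw [Finset.sum_const, hcard]; simp
    have hreal : (2*(N:ℝ)+1) = (k:ℝ)*p + r := by exact_mod_cast hdmZ.symm
    have expand : (2*(N:ℝ)+1) * (s/p) = (k:ℝ)*s + (r:ℝ)*(s/p) := by
      rw [hreal]; field_simp
    have hsum : ∑ n ∈ Finset.Icc (-(N:ℤ)) (N:ℤ), f n = (k:ℝ)*s + B := by
      rw [hIcc, ← hsplit, hA]
    have hrR : (r:ℝ) ≤ p := by exact_mod_cast hrp.le
    have hsp : s/p ≤ 1 := by rw [div_le_one hpR]; exact hs1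
    have hsp0 : 0 ≤ s/p := by positivity
    have hmul : (r:ℝ)*(s/p) ≤ (p:ℝ) := by
      calc (r:ℝ)*(s/p) ≤ (p:ℝ)*1 := by
            apply mul_le_mul hrR hsp hsp0 hpR.le
      _ = p := by ring
    have hmul0 : 0 ≤ (r:ℝ)*(s/p) := by positivity
    rw [hsum, expand, abs_le]
    constructor <;> nlinarith
  have hb : ∀ N : ℕ, ‖(∑ n ∈ Finset.Icc (-(N:ℤ)) (N:ℤ), f n) / (2 * N + 1) - s/p‖
      ≤ (2*(p:ℝ)) / (2*N+1) := by
    intro N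
    have hL : (0:ℝ) < 2*N+1 := by positivity
    rw [Real.norm_eq_abs]
    have e : (∑ n ∈ Finset.Icc (-(N:ℤ)) (N:ℤ), f n) / (2 * (N:ℝ) + 1) - s/p
        = ((∑ n ∈ Finset.Icc (-(N:ℤ)) (N:ℤ), f n) - (2*(N:ℝ)+1) * (s/p)) / (2*(N:ℝ)+1) := by
      rw [sub_div]
      congr 1
      rw [mul_div_cancel_left₀ _ (ne_of_gt hL)]
    rw [e, abs_div, abs_of_pos hL]
    gcongr
    exact key N
  have hg : Tendsto (fun N : ℕ => (2*(p:ℝ)) / (2*N+1)) atTop (𝓝 0) := by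
    apply Tendsto.div_atTop tendsto_const_nhds
    have h2 : Tendsto (fun N : ℕ => 2*(N:ℝ)) atTop atTop :=
      (tendsto_natCast_atTop_atTop).const_mul_atTop (by norm_num : (0:ℝ) < 2)
    exact tendsto_atTop_add_const_right _ 1 h2
  have hmain := squeeze_zero_norm hb hg
  have h2 := hmain.add_const (s/p)
  simp only [zero_add, sub_add_cancel] at h2
  exact h2

section Per
variable {Λ : Type*}

def perP (p : ℕ) (x : ℤ → Λ) (n : ℤ) : Prop := ∀ m : ℤ, x (n + m * p) = x n

lemma perP_add (p : ℕ) (x : ℤ → Λ) (n : ℤ) : perP p x (n + p) ↔ perP p x n := by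
  constructor
  · intro h m
    have h1 := h (-1); have h2 := h (m - 1)
    have e1 : n + (p:ℤ) + (-1) * p = n := by ring
    have e2 : n + (p:ℤ) + (m - 1) * p = n + m * p := by ring
    rw [e1] at h1; rw [e2] at h2; rw [h2, ← h1]
  · intro h m
    have h1 := h 1; have h2 := h (m + 1)
    have e1 : n + (1:ℤ) * p = n + p := by ring
    have e2 : n + (m + 1) * p = n + (p:ℤ) + m * p := by ring
    rw [e1] at h1; rw [e2] at h2; rw [h2, h1]

lemma perP_add_mul (p : ℕ) (x : ℤ → Λ) (n j : ℤ) : perP p x (n + j * p) ↔ perP p x n := by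
  induction j using Int.induction_on with
  | zero => simp
  | succ j ih =>
      have e : n + ((j:ℤ)+1) * p = (n + j * p) + p := by ring
      rw [e, perP_add, ih]
  | pred j ih =>
      rw [← perP_add]
      have e : n + (-(j:ℤ)-1) * p + p = n + (-(j:ℤ)) * p := by ring
      rw [e, ih]

lemma perP_dvd (p : ℕ) (x : ℤ → Λ) {n n' : ℤ} (h : (p:ℤ) ∣ (n' - n)) :
    perP p x n' ↔ perP p x n := by
  obtain ⟨c, hc⟩ := h
  have e : n' = n + c * p := by rw [mul_comm]; linarith
  rw [e, perP_add_mul]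

lemma perP_emod (p : ℕ) (x : ℤ → Λ) (n : ℤ) : perP p x n ↔ perP p x (n % p) := by
  refine (perP_dvd p x (n' := n % p) ⟨-(n / p), ?_⟩).symm
  have := Int.mul_ediv_add_emod n p
  linarith

lemma approx [TopologicalSpace Λ] [DiscreteTopology Λ] (x₀ : ℤ → Λ)
    (x : ℤ → Λ) (hx : x ∈ closure (Set.range fun k : ℤ => fun i : ℤ => x₀ (i + k)))
    (F : Finset ℤ) : ∃ k : ℤ, ∀ i ∈ F, x i = x₀ (i + k) := by
  have hU : IsOpen {y : ℤ → Λ | ∀ i ∈ F, y i = x i} := by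
    have e : {y : ℤ → Λ | ∀ i ∈ F, y i = x i} = Set.pi (↑F) (fun i => {x i}) := by
      ext y; simp [Set.pi]
    rw [e]
    exact isOpen_set_pi F.finite_toSet (fun i _ => isOpen_discrete _)
  have hxU : x ∈ {y : ℤ → Λ | ∀ i ∈ F, y i = x i} := fun i _ => rfl
  rcases _root_.mem_closure_iff.1 hx _ hU hxU with ⟨y, hyU, hyO⟩
  obtain ⟨k, rfl⟩ := hyO
  exact ⟨k, fun i hi => (hyU i hi).symm⟩

lemma perWitness (x₀ : ℤ → Λ)
    (hrr : ∀ n : ℤ, ∃ p : ℕ, 1 ≤ p ∧ ∀ m : ℤ, x₀ (n + m * p) = x₀ n)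
    (p : ℕ) (hp : 1 ≤ p) (r : ℤ) :
    ∃ (Q : ℕ) (m : ℤ), 1 ≤ Q ∧ (p:ℤ) ∣ (Q:ℤ) ∧
      (¬ perP p x₀ r → ∀ t : ℤ, x₀ (r + t * Q + m * p) ≠ x₀ (r + t * Q)) := by
  by_cases h : perP p x₀ r
  · exact ⟨p, 0, hp, dvd_rfl, fun hc => absurd h hc⟩
  · obtain ⟨m, hm⟩ := not_forall.1 h
    obtain ⟨q1, hq1, hq1'⟩ := hrr r
    obtain ⟨q2, hq2, hq2'⟩ := hrr (r + m * p)
    refine ⟨q1 * q2 * p, m, Nat.mul_pos (Nat.mul_pos hq1 hq2) hp,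
      ⟨(q1 * q2 : ℕ), by push_cast; ring⟩, fun _ t => ?_⟩
    have e1 : x₀ (r + t * ((q1 * q2 * p : ℕ):ℤ)) = x₀ r := by
      have e : r + t * ((q1 * q2 * p : ℕ):ℤ) = r + (t * ((q2:ℤ) * p)) * q1 := by
        push_cast; ring
      rw [e]; exact hq1' _
    have e2 : x₀ (r + t * ((q1 * q2 * p : ℕ):ℤ) + m * p) = x₀ (r + m * p) := by
      have e : r + t * ((q1 * q2 * p : ℕ):ℤ) + m * p
          = (r + m * p) + (t * ((q1:ℤ) * p)) * q2 := by push_cast; ring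
      rw [e]; exact hq2' _
    rw [e1, e2]
    exact hm

lemma uniformW (x₀ : ℤ → Λ)
    (hrr : ∀ n : ℤ, ∃ p : ℕ, 1 ≤ p ∧ ∀ m : ℤ, x₀ (n + m * p) = x₀ n)
    (p : ℕ) (hp : 1 ≤ p) :
    ∃ W : ℕ, 1 ≤ W ∧ ∀ n : ℤ, ¬ perP p x₀ n → ∀ a : ℤ,
      ∃ j m : ℤ, a ≤ j ∧ j ≤ a + W ∧ (p:ℤ) ∣ (j - n) ∧ m.natAbs ≤ W ∧
        x₀ (j + m * p) ≠ x₀ j := by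
  choose Q m hQ1 hQd hQW using perWitness x₀ hrr p hp
  refine ⟨((Finset.range p).sup (fun i => Q (i:ℤ) ⊔ (m (i:ℤ)).natAbs)) ⊔ 1,
    le_sup_right, fun n hn a => ?_⟩
  set W := ((Finset.range p).sup (fun i => Q (i:ℤ) ⊔ (m (i:ℤ)).natAbs)) ⊔ 1 with hW
  set r : ℤ := n % p with hr
  have hppos : (0:ℤ) < p := by exact_mod_cast hp
  have hr0 : 0 ≤ r := Int.emod_nonneg n (ne_of_gt hppos)
  have hrp : r < p := Int.emod_lt_of_pos n hppos
  have hnr : ¬ perP p x₀ r := fun hc => hn ((perP_emod p x₀ n).2 hc)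
  have hmem : r.toNat ∈ Finset.range p := by
    rw [Finset.mem_range]; omega
  have hcast : ((r.toNat : ℕ) : ℤ) = r := Int.toNat_of_nonneg hr0
  have hle : Q r ⊔ (m r).natAbs ≤ W := by
    have h1 := Finset.le_sup (f := fun i : ℕ => Q (i:ℤ) ⊔ (m (i:ℤ)).natAbs) hmem
    beta_reduce at h1
    rw [hcast] at h1
    exact le_trans h1 le_sup_left
  have hQle : Q r ≤ W := le_trans le_sup_left hle
  have hmle : (m r).natAbs ≤ W := le_trans le_sup_right hle
  have hQpos : (0:ℤ) < (Q r : ℤ) := by exact_mod_cast hQ1 r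
  set t : ℤ := (a - r) / (Q r) + 1 with ht
  refine ⟨r + t * (Q r), m r, ?_, ?_, ?_, hmle, hQW r hnr t⟩
  · have hediv := Int.mul_ediv_add_emod (a - r) (Q r)
    have hm0 := Int.emod_nonneg (a - r) (ne_of_gt hQpos)
    have hmlt := Int.emod_lt_of_pos (a - r) hQpos
    have e : t * (Q r : ℤ) = (Q r : ℤ) * ((a - r) / (Q r)) + Q r := by rw [ht]; ring
    linarith [e ▸ (rfl : t * (Q r : ℤ) = t * (Q r : ℤ))]
  · have hediv := Int.mul_ediv_add_emod (a - r) (Q r)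
    have hm0 := Int.emod_nonneg (a - r) (ne_of_gt hQpos)
    have hWQ : (Q r : ℤ) ≤ (W : ℤ) := by exact_mod_cast hQle
    have e : t * (Q r : ℤ) = (Q r : ℤ) * ((a - r) / (Q r)) + Q r := by rw [ht]; ring
    linarith
  · have hdr : (p:ℤ) ∣ (r - n) := ⟨-(n / p), by
      have := Int.mul_ediv_add_emod n p
      rw [hr]; linarith⟩
    have hdt : (p:ℤ) ∣ t * (Q r : ℤ) := Dvd.dvd.mul_left (hQd r) t
    have e : r + t * (Q r : ℤ) - n = (r - n) + t * (Q r : ℤ) := by ring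
    rw [e]
    exact dvd_add hdr hdt

lemma key_equiv [TopologicalSpace Λ] [DiscreteTopology Λ] (x₀ : ℤ → Λ)
    (hrr : ∀ n : ℤ, ∃ p : ℕ, 1 ≤ p ∧ ∀ m : ℤ, x₀ (n + m * p) = x₀ n)
    (p : ℕ) (hp : 1 ≤ p) (x : ℤ → Λ)
    (hx : x ∈ closure (Set.range fun k : ℤ => fun i : ℤ => x₀ (i + k))) :
    ∃ k : ℤ, ∀ i : ℤ, 0 ≤ i → i < p → (perP p x i ↔ perP p x₀ (i + k)) := by
  obtain ⟨W, hW1, hW⟩ := uniformW x₀ hrr p hp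
  have H2 : ∀ i : ℤ, ∃ m : ℤ, (¬ perP p x i → x (i + m * p) ≠ x i) := by
    intro i
    by_cases h : perP p x i
    · exact ⟨0, fun hc => absurd h hc⟩
    · obtain ⟨m, hm⟩ := not_forall.1 h
      exact ⟨m, fun _ => hm⟩
  choose w hw using H2
  have hWp : (0:ℤ) ≤ (W:ℤ) * p := by positivity
  have hW0 : (0:ℤ) ≤ (W:ℤ) := Int.natCast_nonneg W
  have hp0 : (0:ℤ) ≤ (p:ℤ) := Int.natCast_nonneg p
  set W' : ℤ := (W:ℤ) + (W:ℤ) * p + p with hW'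
  set F : Finset ℤ := Finset.Icc (-W') W'
      ∪ (Finset.range p).image (fun r : ℕ => (r:ℤ) + w (r:ℤ) * p) with hF
  obtain ⟨k, hk⟩ := approx x₀ x hx F
  refine ⟨k, fun i hi0 hip => ?_⟩
  have hiF : i ∈ F := by
    apply Finset.mem_union_left
    rw [Finset.mem_Icc]
    constructor <;> linarith
  constructor
  · intro hpx
    by_contra hcon
    obtain ⟨j, m, hj1, hj2, hjd, hmW, hne⟩ := hW (i + k) hcon k
    set j' : ℤ := j - k with hj'
    have hj'0 : 0 ≤ j' := by linarith
    have hj'W : j' ≤ W := by linarith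
    have hd : (p:ℤ) ∣ (j' - i) := by
      have e : j - (i + k) = j' - i := by ring
      rwa [e] at hjd
    have hmabs : |m| ≤ (W:ℤ) := by
      rw [Int.abs_eq_natAbs]
      exact_mod_cast hmW
    have hmp : |m * p| ≤ (W:ℤ) * p := by
      rw [abs_mul, abs_of_nonneg hp0]
      exact mul_le_mul_of_nonneg_right hmabs hp0
    have hmpl := abs_le.1 hmp
    have hmem1 : j' ∈ F := by
      apply Finset.mem_union_left
      rw [Finset.mem_Icc]
      constructor <;> linarith
    have hmem2 : j' + m * p ∈ F := by
      apply Finset.mem_union_left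
      rw [Finset.mem_Icc]
      constructor <;> linarith [hmpl.1, hmpl.2]
    have e1 : x j' = x₀ j := by rw [hk j' hmem1]; congr 1; ring
    have e2 : x (j' + m * p) = x₀ (j + m * p) := by rw [hk _ hmem2]; congr 1; ring
    have hper : perP p x j' := (perP_dvd p x hd).2 hpx
    exact hne (by rw [← e2, hper m, e1])
  · intro hx₀
    by_contra hcon
    have hwit := hw i hcon
    have hmemw : i + w i * p ∈ F := by
      apply Finset.mem_union_right
      rw [Finset.mem_image]
      refine ⟨i.toNat, ?_, ?_⟩
      · rw [Finset.mem_range]; omega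
      · rw [Int.toNat_of_nonneg hi0]
    have e1 : x i = x₀ (i + k) := hk i hiF
    have e2 : x (i + w i * p) = x₀ (i + w i * p + k) := hk _ hmemw
    have e3 : x₀ (i + w i * p + k) = x₀ (i + k) := by
      have h := hx₀ (w i)
      rw [← h]; congr 1; ring
    exact hwit (by rw [e2, e3, ← e1])
end Per

/-- In a Toeplitz subshift (the orbit closure `X` of a regularly recurrent
sequence `x₀ : ℤ → Λ`), for each `p ≥ 1` the two-sided density of the `p`-periodic part
`Per_p(x)` exists and takes the same value for every `x ∈ X`. -/
theorem density_of_periodic_part_constant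
    {Λ : Type*} [Finite Λ] [Nonempty Λ] [TopologicalSpace Λ] [DiscreteTopology Λ]
    (x₀ : ℤ → Λ)
    (hrr : ∀ n : ℤ, ∃ p : ℕ, 1 ≤ p ∧ ∀ m : ℤ, x₀ (n + m * p) = x₀ n) :
    ∀ p : ℕ, 1 ≤ p → ∃ d : ℝ,
      ∀ x ∈ closure (Set.range fun k : ℤ => fun i : ℤ => x₀ (i + k)),
        Tendsto (fun N : ℕ =>
            (∑ n ∈ Finset.Icc (-(N : ℤ)) (N : ℤ),
              if (∀ m : ℤ, x (n + m * p) = x n) then (1 : ℝ) else 0) / (2 * N + 1))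
          atTop (𝓝 d) := by
  intro p hp
  refine ⟨(∑ i ∈ Finset.range p, if perP p x₀ (i:ℤ) then (1:ℝ) else 0) / p, ?_⟩
  intro x hx
  set f : ℤ → ℝ := fun n => if perP p x n then 1 else 0 with hfdef
  have hf : ∀ n, f (n + p) = f n := by
    intro n
    simp only [hfdef]
    exact if_congr (perP_add p x n) rfl rfl
  have h0 : ∀ n, 0 ≤ f n := by
    intro n; simp only [hfdef]; split_ifs <;> norm_num
  have h1 : ∀ n, f n ≤ 1 := by
    intro n; simp only [hfdef]; split_ifs <;> norm_num
  have hten := density_periodic p hp f hf h0 h1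
  obtain ⟨k, hk⟩ := key_equiv x₀ hrr p hp x hx
  have hsx : ∑ i ∈ Finset.range p, f i
      = ∑ i ∈ Finset.range p, (if perP p x₀ ((i:ℤ) + k) then (1:ℝ) else 0) := by
    apply Finset.sum_congr rfl
    intro i hi
    have hiff := hk i (Int.natCast_nonneg i) (by exact_mod_cast Finset.mem_range.1 hi)
    simp only [hfdef]
    exact if_congr hiff rfl rfl
  have hper₀ : ∀ n : ℤ, (if perP p x₀ (n + (p:ℤ)) then (1:ℝ) else 0)
      = (if perP p x₀ n then (1:ℝ) else 0) :=
    fun n => if_congr (perP_add p x₀ n) rfl rfl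
  have hg : ∑ i ∈ Finset.range p, (if perP p x₀ ((i:ℤ) + k) then (1:ℝ) else 0)
      = ∑ i ∈ Finset.range p, (if perP p x₀ (i:ℤ) then (1:ℝ) else 0) := by
    have hfw := sum_window p (fun n => if perP p x₀ n then (1:ℝ) else 0) hper₀ k
    rw [← hfw]
    apply Finset.sum_congr rfl
    intro i _
    exact if_congr (iff_of_eq (by rw [add_comm])) rfl rfl
  rw [hsx, hg] at hten
  exact hten
end

section
/- Let (X, T) be a minimal topological dynamical system on a compact metric space (T a homeomorphism), let (G, τ) be an odometer with Haar probability measure λ, and let π : X → G be an almost 1-1 factor map. Assume regularity: λ({g ∈ G : π⁻¹({g}) is a singleton}) = 1. Then (X, T) is uniquely ergodic; moreover, its unique T-invariant Borel probability measure μ satisfies π_*μ = λ, and π is injective on a Borel subset of X of full μ-measure, so that π is a measure-theoretic isomorphism between (X, μ, T) and (G, λ, τ). -/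
open Filter Topology MeasureTheory

/-- The set of points whose fiber has small diameter is open. -/
lemma aux_open_diam_lt {X : Type*} [MetricSpace X] [CompactSpace X]
    {G : Type*} [TopologicalSpace G] [T2Space G]
    (π : X → G) (hπcont : Continuous π) (hπsurj : Function.Surjective π)
    {ε : ℝ} (hε : 0 < ε) : IsOpen {g : G | Metric.diam (π ⁻¹' {g}) < ε} := by
  rw [isOpen_iff_mem_nhds]
  intro g hg
  set K : Set X := π ⁻¹' {g} with hK
  have hKne : K.Nonempty := hπsurj g
  set d : ℝ := Metric.diam K with hd
  have hdε : d < ε := hg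
  set δ : ℝ := (ε - d) / 3 with hδ
  have hδpos : 0 < δ := by
    have : 0 ≤ d := Metric.diam_nonneg
    simp only [hδ]; linarith
  set U : Set X := {x : X | Metric.infDist x K < δ} with hU
  have hUopen : IsOpen U := by
    have : Continuous fun x : X => Metric.infDist x K := Metric.continuous_infDist_pt K
    exact isOpen_lt this continuous_const
  have hKU : K ⊆ U := fun x hx => by
    simp only [hU, Set.mem_setOf_eq, Metric.infDist_zero_of_mem hx]; exact hδpos
  have hUdiam : ∀ x ∈ U, ∀ y ∈ U, dist x y ≤ d + 2 * δ := by
    intro x hx y hy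
    obtain ⟨x', hx'K, hx'⟩ := (Metric.infDist_lt_iff hKne).1 hx
    obtain ⟨y', hy'K, hy'⟩ := (Metric.infDist_lt_iff hKne).1 hy
    have h1 : dist x' y' ≤ d :=
      Metric.dist_le_diam_of_mem (IsCompact.isBounded (isCompact_univ.of_isClosed_subset
        (isClosed_singleton.preimage hπcont) (Set.subset_univ K))) hx'K hy'K
    calc dist x y ≤ dist x x' + dist x' y' + dist y' y := dist_triangle4 x x' y' y
      _ ≤ δ + d + δ := by
          have := dist_comm y y' ▸ hy'
          linarith [hx'.le, h1]
      _ = d + 2 * δ := by ring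
  have hCc : IsCompact (π '' Uᶜ) := (hUopen.isClosed_compl.isCompact).image hπcont
  have hgC : g ∉ π '' Uᶜ := by
    rintro ⟨x, hxU, hxg⟩
    exact hxU (hKU (by simp [hK, hxg]))
  have hmem : (π '' Uᶜ)ᶜ ∈ nhds g := hCc.isClosed.isOpen_compl.mem_nhds hgC
  refine Filter.mem_of_superset hmem ?_
  intro g' hg'
  have hfib : π ⁻¹' {g'} ⊆ U := by
    intro x hx
    by_contra hxU
    exact hg' ⟨x, hxU, hx⟩
  have hd0 : 0 ≤ d := Metric.diam_nonneg
  have : Metric.diam (π ⁻¹' {g'}) ≤ d + 2 * δ :=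
    Metric.diam_le_of_forall_dist_le (by linarith) fun x hx y hy => hUdiam x (hfib hx) y (hfib hy)
  have : Metric.diam (π ⁻¹' {g'}) ≤ d + 2 * ((ε - d) / 3) := this
  show Metric.diam (π ⁻¹' {g'}) < ε
  linarith

/-- The set of points with singleton fiber is measurable (it is a Gδ set). -/
lemma aux_S_meas {X : Type*} [MetricSpace X] [CompactSpace X]
    {G : Type*} [TopologicalSpace G] [T2Space G] [MeasurableSpace G] [OpensMeasurableSpace G]
    (π : X → G) (hπcont : Continuous π) (hπsurj : Function.Surjective π) :
    MeasurableSet {g : G | ∃ x : X, π ⁻¹' {g} = {x}} := by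
  have key : {g : G | ∃ x : X, π ⁻¹' {g} = {x}}
      = ⋂ n : ℕ, {g : G | Metric.diam (π ⁻¹' {g}) < 1 / (n + 1)} := by
    ext g
    simp only [Set.mem_setOf_eq, Set.mem_iInter]
    constructor
    · rintro ⟨x, hx⟩ n
      rw [hx, Metric.diam_singleton]
      positivity
    · intro h
      obtain ⟨x, hx⟩ := hπsurj g
      have hbd : Bornology.IsBounded (π ⁻¹' {g}) :=
        (isCompact_univ.of_isClosed_subset (isClosed_singleton.preimage hπcont)
          (Set.subset_univ _)).isBounded
      have hdiam : Metric.diam (π ⁻¹' {g}) = 0 := by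
        have h0 : Metric.diam (π ⁻¹' {g}) ≤ 0 := by
          by_contra hpos
          push_neg at hpos
          obtain ⟨n, hn⟩ := exists_nat_one_div_lt hpos
          exact absurd (h n) (not_lt.2 hn.le)
        exact le_antisymm h0 Metric.diam_nonneg
      refine ⟨x, ?_⟩
      ext y
      simp only [Set.mem_preimage, Set.mem_singleton_iff]
      constructor
      · intro hy
        have : dist y x ≤ Metric.diam (π ⁻¹' {g}) :=
          Metric.dist_le_diam_of_mem hbd hy hx
        rw [hdiam] at this
        exact dist_le_zero.1 this
      · intro hy; rw [hy]; exact hx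
  rw [key]
  exact MeasurableSet.iInter fun n =>
    (aux_open_diam_lt π hπcont hπsurj (by positivity)).measurableSet

/-- A regular almost 1-1 extension `(X,T)` of an odometer `(G,τ)` (regular:
`λ`-almost every fiber of `π` is a singleton, `λ` the Haar probability measure) is uniquely
ergodic, and the factor map `π` is a measure-theoretic isomorphism between the unique invariant
measure `μ` and `λ`: `π_*μ = λ` and `π` is injective on a Borel set of full `μ`-measure. -/
theorem regular_almost_one_one_extension_uniquely_ergodic_and_isomorphic
    {X : Type*} [MetricSpace X] [CompactSpace X] [MeasurableSpace X] [BorelSpace X]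
    {G : Type*} [AddCommGroup G] [TopologicalSpace G] [IsTopologicalAddGroup G]
    [CompactSpace G] [TopologicalSpace.MetrizableSpace G]
    [TotallyDisconnectedSpace G] [Infinite G]
    [MeasurableSpace G] [BorelSpace G]
    (g₀ : G) (hgen : Dense (Set.range fun n : ℤ => n • g₀))
    -- λ is the Haar probability measure of G
    (lam : Measure G) (hlamprob : IsProbabilityMeasure lam)
    (hlaminv : ∀ g : G, lam.map (fun h => g + h) = lam)
    (T : X ≃ₜ X)
    -- (X,T) is minimal
    (hmin : ∀ x : X, Dense (Set.range fun n : ℤ => (T.toEquiv ^ n) x))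
    -- π is a factor map onto the odometer (G, τ), τ(g) = g + g₀
    (π : X → G) (hπcont : Continuous π) (hπsurj : Function.Surjective π)
    (hπequiv : ∀ x : X, π (T x) = π x + g₀)
    -- π is almost 1-1
    (ha11 : {x : X | π ⁻¹' {π x} = {x}} ∈ residual X)
    -- regularity: λ-almost every fiber is a singleton
    (hreg : lam {g : G | ∃ x : X, π ⁻¹' {g} = {x}} = 1) :
    -- (X,T) is uniquely ergodic …
    (∃! μ : Measure X, IsProbabilityMeasure μ ∧ μ.map T = μ) ∧
    -- … and its unique invariant measure is carried isomorphically onto λ by π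
    (∀ μ : Measure X, IsProbabilityMeasure μ → μ.map T = μ →
      μ.map π = lam ∧ ∃ B : Set X, MeasurableSet B ∧ μ B = 1 ∧ Set.InjOn π B) := by
  classical
  letI : MetricSpace G := TopologicalSpace.metrizableSpaceMetric G
  haveI : Nonempty X := ⟨(hπsurj (Classical.arbitrary G)).choose⟩
  -- the set of points with singleton fiber
  set S : Set G := {g : G | ∃ x : X, π ⁻¹' {g} = {x}} with hSdef
  have hSmeas : MeasurableSet S := aux_S_meas π hπcont hπsurj
  set B : Set X := π ⁻¹' S with hBdef
  have hBmeas : MeasurableSet B := hπcont.measurable hSmeas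
  -- π is injective on B
  have hinjB : Set.InjOn π B := by
    intro x hx y hy hxy
    obtain ⟨z, hz⟩ := hx
    have hxz : x ∈ π ⁻¹' {π x} := rfl
    have hyz : y ∈ π ⁻¹' {π x} := by simp [Set.mem_preimage, hxy]
    rw [hz] at hxz hyz
    rw [hxz, hyz]
  -- Lusin–Suslin: images of measurable subsets of B are measurable
  have himg_meas : ∀ A : Set X, MeasurableSet A → MeasurableSet (π '' (A ∩ B)) := by
    intro A hA
    exact (hA.inter hBmeas).image_of_continuousOn_injOn hπcont.continuousOn
      (hinjB.mono Set.inter_subset_right)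
  -- structure of sets intersected with B
  have hAB : ∀ A : Set X, A ∩ B = π ⁻¹' (π '' (A ∩ B)) ∩ B := by
    intro A
    apply Set.Subset.antisymm
    · intro x hx
      exact ⟨⟨x, hx, rfl⟩, hx.2⟩
    · rintro x ⟨⟨y, hyAB, hyx⟩, hxB⟩
      have : y = x := hinjB hyAB.2 hxB hyx
      exact this ▸ hyAB
  -- every invariant probability measure pushes forward to lam
  have hpush : ∀ μ : Measure X, IsProbabilityMeasure μ → μ.map T = μ → μ.map π = lam := by
    intro μ hμprob hμinv
    set ν : Measure G := μ.map π with hν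
    haveI : IsProbabilityMeasure ν := Measure.isProbabilityMeasure_map hπcont.measurable.aemeasurable
    -- ν is invariant under the translation by g₀
    have hstep : ν.map (fun h => g₀ + h) = ν := by
      have h1 : (fun h : G => g₀ + h) = fun h : G => h + g₀ := by
        funext h; exact add_comm _ _
      rw [h1, hν, Measure.map_map (measurable_add_const g₀) hπcont.measurable]
      have h2 : ((fun h : G => h + g₀) ∘ π) = π ∘ T := by
        funext x; simp [hπequiv x]
      rw [h2, ← Measure.map_map hπcont.measurable T.continuous.measurable, hμinv]
    -- the set of translations preserving ν is a subgroup
    let Hsub : AddSubgroup G :=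
      { carrier := {g : G | ν.map (fun h => g + h) = ν}
        zero_mem' := by simp
        add_mem' := by
          intro a b ha hb
          have : (fun h : G => a + b + h) = (fun h : G => a + h) ∘ fun h : G => b + h := by
            funext h; simp [add_assoc]
          simp only [Set.mem_setOf_eq] at ha hb ⊢
          rw [this, ← Measure.map_map (measurable_const_add a) (measurable_const_add b), hb, ha]
        neg_mem' := by
          intro a ha
          simp only [Set.mem_setOf_eq] at ha ⊢
          conv_lhs => rw [← ha]
          rw [Measure.map_map (measurable_const_add (-a)) (measurable_const_add a)]
          have : ((fun h : G => -a + h) ∘ fun h : G => a + h) = id := by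
            funext h; simp
          rw [this, Measure.map_id] }
    have hzmul : ∀ n : ℤ, (n • g₀) ∈ Hsub := fun n => AddSubgroup.zsmul_mem Hsub hstep n
    -- ν is invariant under all translations, by density
    have hall : ∀ g : G, ν.map (fun h => g + h) = ν := by
      intro g
      have hgcl : g ∈ closure (Set.range fun n : ℤ => n • g₀) := by
        rw [hgen.closure_eq]; trivial
      obtain ⟨u, hu_mem, hu_lim⟩ := mem_closure_iff_seq_limit.1 hgcl
      have hu_inv : ∀ k : ℕ, ν.map (fun h => u k + h) = ν := by
        intro k
        obtain ⟨n, hn⟩ := hu_mem k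
        rw [← hn]
        exact hzmul n
      haveI : IsProbabilityMeasure (ν.map (fun h => g + h)) :=
        Measure.isProbabilityMeasure_map (measurable_const_add g).aemeasurable
      apply ext_of_forall_lintegral_eq_of_IsFiniteMeasure
      intro f
      have hfm : Measurable fun x : G => (f x : ENNReal) :=
        (ENNReal.continuous_coe.comp f.continuous).measurable
      rw [lintegral_map hfm (measurable_const_add g)]
      have heval : ∀ k : ℕ, ∫⁻ h, (f (u k + h) : ENNReal) ∂ν = ∫⁻ x, (f x : ENNReal) ∂ν := by
        intro k
        rw [← lintegral_map hfm (measurable_const_add (u k)), hu_inv k]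
      have hlim : Tendsto (fun k : ℕ => ∫⁻ h, (f (u k + h) : ENNReal) ∂ν) atTop
          (nhds (∫⁻ h, (f (g + h) : ENNReal) ∂ν)) := by
        apply tendsto_lintegral_of_dominated_convergence (fun _ => (nndist f 0 : ENNReal))
        · intro k
          exact (ENNReal.continuous_coe.comp
            (f.continuous.comp (continuous_const.add continuous_id))).measurable
        · intro k
          filter_upwards with h
          have hb := @BoundedContinuousFunction.nndist_coe_le_nndist _ _ _ _ f 0 (u k + h)
          rw [BoundedContinuousFunction.coe_zero, Pi.zero_apply, nndist_comm,
            NNReal.nndist_zero_eq_val] at hb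
          exact_mod_cast hb
        · rw [lintegral_const]
          exact ENNReal.mul_ne_top ENNReal.coe_ne_top (measure_ne_top _ _)
        · filter_upwards with h
          have h1 : Tendsto (fun k => u k + h) atTop (nhds (g + h)) :=
            hu_lim.add tendsto_const_nhds
          exact (ENNReal.continuous_coe.continuousAt.tendsto.comp
            (f.continuous.continuousAt.tendsto.comp h1))
      rw [Filter.tendsto_congr heval] at hlim
      exact tendsto_nhds_unique hlim tendsto_const_nhds
    -- hence ν = lam, by uniqueness of Haar measure
    haveI hν_inv : ν.IsAddLeftInvariant := ⟨hall⟩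
    haveI hlam_inv : lam.IsAddLeftInvariant := ⟨hlaminv⟩
    haveI : lam.IsOpenPosMeasure :=
      isOpenPosMeasure_of_addLeftInvariant_of_compact Set.univ isCompact_univ (by simp)
    haveI : lam.IsAddHaarMeasure := ⟨⟩
    have huniq := Measure.isAddInvariant_eq_smul_of_compactSpace ν lam
    have hc : Measure.addHaarScalarFactor ν lam = 1 := by
      have h1 := congrArg (fun m : Measure G => m Set.univ) huniq
      simp only [Measure.smul_apply, measure_univ, ENNReal.smul_def, mul_one,
        smul_eq_mul] at h1
      exact_mod_cast h1.symm
    rw [huniq, hc, one_smul]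
  -- key identity for invariant measures
  have hlamS : lam S = 1 := hreg
  have hkey : ∀ μ : Measure X, IsProbabilityMeasure μ → μ.map T = μ →
      ∀ A : Set X, MeasurableSet A → μ A = lam (π '' (A ∩ B)) := by
    intro μ hμprob hμinv A hA
    have hmapπ := hpush μ hμprob hμinv
    have hμB : μ B = 1 := by
      rw [hBdef, ← Measure.map_apply hπcont.measurable hSmeas, hmapπ, hlamS]
    have hμBc : μ Bᶜ = 0 := by
      rw [← prob_compl_eq_zero_iff hBmeas] at hμB; exact hμB
    calc μ A = μ (A ∩ B) := (measure_inter_conull hμBc).symm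
      _ = μ (π ⁻¹' (π '' (A ∩ B)) ∩ B) := by rw [← hAB A]
      _ = μ (π ⁻¹' (π '' (A ∩ B))) := measure_inter_conull hμBc
      _ = (μ.map π) (π '' (A ∩ B)) :=
          (Measure.map_apply hπcont.measurable (himg_meas A hA)).symm
      _ = lam (π '' (A ∩ B)) := by rw [hmapπ]
  -- construction of the invariant measure
  set x₀ : X := Classical.arbitrary X with hx₀
  set f : G → X := fun g => if h : ∃ x : X, π ⁻¹' {g} = {x} then h.choose else x₀ with hf
  have hfS : ∀ g ∈ S, π ⁻¹' {g} = {f g} := by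
    intro g hg
    have hg' : ∃ x : X, π ⁻¹' {g} = {x} := hg
    simp only [hf]
    rw [dif_pos hg']
    exact hg'.choose_spec
  have hfπ : ∀ g ∈ S, π (f g) = g := by
    intro g hg
    have : f g ∈ π ⁻¹' {g} := by rw [hfS g hg]; rfl
    simpa using this
  have hfB : ∀ g ∈ S, f g ∈ B := by
    intro g hg
    show π (f g) ∈ S
    rw [hfπ g hg]; exact hg
  have hfmeas : Measurable f := by
    intro A hA
    have hpre : f ⁻¹' A = π '' (A ∩ B) ∪ (if x₀ ∈ A then Sᶜ else ∅) := by
      ext g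
      by_cases hg : g ∈ S
      · simp only [Set.mem_preimage, Set.mem_union]
        constructor
        · intro hfA
          left
          exact ⟨f g, ⟨hfA, hfB g hg⟩, hfπ g hg⟩
        · rintro (⟨x, hxAB, hxg⟩ | hrest)
          · have : x ∈ π ⁻¹' {g} := by simp [hxg]
            rw [hfS g hg] at this
            simp only [Set.mem_singleton_iff] at this
            rw [← this]; exact hxAB.1
          · exfalso
            by_cases hx₀A : x₀ ∈ A
            · rw [if_pos hx₀A] at hrest; exact hrest hg
            · rw [if_neg hx₀A] at hrest; exact hrest
      · have hfg : f g = x₀ := by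
          have hg' : ¬ ∃ x : X, π ⁻¹' {g} = {x} := hg
          simp only [hf]
          exact dif_neg hg'
        simp only [Set.mem_preimage, Set.mem_union, hfg]
        constructor
        · intro hx₀A
          right
          rw [if_pos hx₀A]
          exact hg
        · rintro (⟨x, hxAB, hxg⟩ | hrest)
          · exact absurd (hxg ▸ hxAB.2) hg
          · by_cases hx₀A : x₀ ∈ A
            · exact hx₀A
            · rw [if_neg hx₀A] at hrest; exact absurd hrest (Set.notMem_empty g)
    rw [hpre]
    refine (himg_meas A hA).union ?_
    by_cases hx₀A : x₀ ∈ A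
    · rw [if_pos hx₀A]; exact hSmeas.compl
    · rw [if_neg hx₀A]; exact MeasurableSet.empty
  set μ₀ : Measure X := lam.map f with hμ₀
  haveI hμ₀prob : IsProbabilityMeasure μ₀ := Measure.isProbabilityMeasure_map hfmeas.aemeasurable
  -- invariance of μ₀
  have hSinv : ∀ g ∈ S, g + g₀ ∈ S ∧ f (g + g₀) = T (f g) := by
    intro g hg
    have hfib : π ⁻¹' {g + g₀} = {T (f g)} := by
      ext y
      simp only [Set.mem_preimage, Set.mem_singleton_iff]
      constructor
      · intro hy
        have h1 : π (T (T.symm y)) = π (T.symm y) + g₀ := hπequiv (T.symm y)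
        rw [T.apply_symm_apply] at h1
        have h2 : π (T.symm y) = g := by
          have : π (T.symm y) + g₀ = g + g₀ := by rw [← h1, hy]
          exact add_right_cancel this
        have : T.symm y ∈ π ⁻¹' {g} := by simp [h2]
        rw [hfS g hg] at this
        simp only [Set.mem_singleton_iff] at this
        rw [← T.apply_symm_apply y, this]
      · intro hy
        rw [hy, hπequiv, hfπ g hg]
    have hgS : g + g₀ ∈ S := ⟨T (f g), hfib⟩
    refine ⟨hgS, ?_⟩
    have := hfS (g + g₀) hgS
    rw [hfib] at this
    exact (Set.singleton_eq_singleton_iff.1 this).symm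
  have hμ₀inv : μ₀.map T = μ₀ := by
    rw [hμ₀, Measure.map_map T.continuous.measurable hfmeas]
    have hae : (⇑T ∘ f) =ᵐ[lam] (f ∘ fun g => g + g₀) := by
      have hsub : {g : G | (⇑T ∘ f) g ≠ (f ∘ fun g => g + g₀) g} ⊆ Sᶜ := by
        intro g hg
        simp only [Set.mem_setOf_eq, Function.comp_apply] at hg
        intro hgS
        exact hg ((hSinv g hgS).2).symm
      have hSc : lam Sᶜ = 0 := by
        rw [← prob_compl_eq_zero_iff hSmeas] at hlamS; exact hlamS
      exact measure_mono_null hsub hSc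
    rw [Measure.map_congr hae,
      ← Measure.map_map hfmeas (measurable_add_const g₀)]
    have : lam.map (fun g => g + g₀) = lam := by
      have h1 : (fun g : G => g + g₀) = fun g : G => g₀ + g := by
        funext g; exact add_comm _ _
      rw [h1, hlaminv g₀]
    rw [this]
  constructor
  · exact ⟨μ₀, ⟨hμ₀prob, hμ₀inv⟩, fun ν ⟨hν1, hν2⟩ =>
      Measure.ext fun A hA => (hkey ν hν1 hν2 A hA).trans (hkey μ₀ hμ₀prob hμ₀inv A hA).symm⟩
  · intro μ hμprob hμinv
    refine ⟨hpush μ hμprob hμinv, B, hBmeas, ?_, hinjB⟩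
    rw [hBdef, ← Measure.map_apply hπcont.measurable hSmeas, hpush μ hμprob hμinv, hlamS]
end
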